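/- For positive definite matrices p, q, one has g = p ♯ q if and only if g is positive definite and q = g p^{-1} g. -/

import Mathlib

open Matrix
open scoped ComplexOrder

noncomputable def mpow {m : Type*} [Fintype m] [DecidableEq m]
    (A : Matrix m m ℂ) (t : ℝ) : Matrix m m ℂ :=
  if h : A.IsHermitian then
    (h.eigenvectorUnitary : Matrix m m ℂ) *
      Matrix.diagonal (fun i => ((h.eigenvalues i ^ t : ℝ) : ℂ)) *
      star (h.eigenvectorUnitary : Matrix m m ℂ)
  else A

/-- t-metric geometric mean `A ♯ₜ B`. -/
noncomputable def msharp {m : Type*} [Fintype m] [DecidableEq m]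
    (A B : Matrix m m ℂ) (t : ℝ) : Matrix m m ℂ :=
  mpow A (1/2) * mpow (mpow A (-(1/2)) * B * mpow A (-(1/2))) t * mpow A (1/2)

/-- t-spectral geometric mean `A ♮ₜ B`. -/
noncomputable def mnat {m : Type*} [Fintype m] [DecidableEq m]
    (A B : Matrix m m ℂ) (t : ℝ) : Matrix m m ℂ :=
  mpow (msharp A⁻¹ B (1/2)) t * A * mpow (msharp A⁻¹ B (1/2)) t

/-- Eigenvalues in non-increasing order (junk value `0` if not Hermitian). -/
noncomputable def eigsDesc {n : ℕ} (A : Matrix (Fin n) (Fin n) ℂ) : Fin n → ℝ :=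
  if h : A.IsHermitian then (fun i => h.eigenvalues (Tuple.sort h.eigenvalues i.rev)) else 0

/-- `x` is log-majorized by `y` (both listed in non-increasing order). -/
def LogMaj {n : ℕ} (x y : Fin n → ℝ) : Prop :=
  (∀ k : ℕ, ∏ i ∈ Finset.univ.filter (fun i : Fin n => (i : ℕ) < k), x i ≤
      ∏ i ∈ Finset.univ.filter (fun i : Fin n => (i : ℕ) < k), y i) ∧
    ∏ i, x i = ∏ i, y i

/-- k-th compound matrix. -/
noncomputable def compound {n : ℕ} (k : ℕ) (A : Matrix (Fin n) (Fin n) ℂ) :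
    Matrix {s : Finset (Fin n) // s.card = k} {s : Finset (Fin n) // s.card = k} ℂ :=
  fun s t => (A.submatrix (fun i => (s.1.orderIsoOfFin s.2 i : Fin n))
    (fun i => (t.1.orderIsoOfFin t.2 i : Fin n))).det


open scoped MatrixOrder

section aux
variable {m : Type*} [Fintype m] [DecidableEq m] {A : Matrix m m ℂ}

lemma mpow_def (h : A.IsHermitian) (t : ℝ) :
    mpow A t = (h.eigenvectorUnitary : Matrix m m ℂ) *
      Matrix.diagonal (fun i => ((h.eigenvalues i ^ t : ℝ) : ℂ)) *
      star (h.eigenvectorUnitary : Matrix m m ℂ) := dif_pos h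

lemma posDef_conj {A : Matrix m m ℂ} (hA : A.PosDef) {B : Matrix m m ℂ}
    (hB : IsUnit B.det) : (B * A * Bᴴ).PosDef := by
  refine posDef_iff_dotProduct_mulVec.2 ⟨isHermitian_mul_mul_conjTranspose _ hA.1, fun x hx => ?_⟩
  have h1 : star x ⬝ᵥ (B * A * Bᴴ) *ᵥ x = star (Bᴴ *ᵥ x) ⬝ᵥ A *ᵥ (Bᴴ *ᵥ x) := by
    simp only [star_mulVec, dotProduct_mulVec, vecMul_vecMul, conjTranspose_conjTranspose]
  rw [h1]
  refine (posDef_iff_dotProduct_mulVec.1 hA).2 fun h0 => hx ?_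
  have hBH : IsUnit Bᴴ.det := by
    rw [det_conjTranspose]; exact hB.star
  have := (Matrix.isUnit_iff_isUnit_det _).2 hBH
  calc x = (Bᴴ)⁻¹ *ᵥ (Bᴴ *ᵥ x) := by
        rw [mulVec_mulVec, nonsing_inv_mul _ hBH, one_mulVec]
    _ = 0 := by rw [h0, mulVec_zero]

lemma unit_conj_posDef {A : Matrix m m ℂ} (h : A.IsHermitian)
    (d : m → ℝ) (hd : ∀ i, 0 < d i) :
    ((h.eigenvectorUnitary : Matrix m m ℂ) * Matrix.diagonal (fun i => ((d i : ℝ) : ℂ)) *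
      star (h.eigenvectorUnitary : Matrix m m ℂ)).PosDef := by
  have hdiag : (Matrix.diagonal (fun i => ((d i : ℝ) : ℂ))).PosDef := by
    rw [posDef_diagonal_iff]
    intro i
    exact_mod_cast Complex.zero_lt_real.2 (hd i)
  have hU : IsUnit ((h.eigenvectorUnitary : Matrix m m ℂ)).det := by
    have h1 : (star (h.eigenvectorUnitary : Matrix m m ℂ)).det *
        ((h.eigenvectorUnitary : Matrix m m ℂ)).det = 1 := by
      rw [← det_mul, Unitary.coe_star_mul_self, det_one]
    exact IsUnit.of_mul_eq_one _ ((mul_comm _ _).trans h1)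
  have := posDef_conj hdiag hU
  simpa [Matrix.star_eq_conjTranspose] using this

lemma mpow_posDef (hA : A.PosDef) (t : ℝ) : (mpow A t).PosDef := by
  rw [mpow_def hA.isHermitian]
  exact unit_conj_posDef hA.isHermitian _ (fun i => Real.rpow_pos_of_pos (hA.eigenvalues_pos i) t)

lemma mpow_mul_mpow (hA : A.PosDef) (s t : ℝ) :
    mpow A s * mpow A t = mpow A (s + t) := by
  rw [mpow_def hA.isHermitian, mpow_def hA.isHermitian, mpow_def hA.isHermitian]
  set U := (hA.isHermitian.eigenvectorUnitary : Matrix m m ℂ) with hUdef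
  have hU : star U * U = 1 := Unitary.coe_star_mul_self _
  have hdd : Matrix.diagonal (fun i => ((hA.isHermitian.eigenvalues i ^ s : ℝ) : ℂ)) *
      Matrix.diagonal (fun i => ((hA.isHermitian.eigenvalues i ^ t : ℝ) : ℂ)) =
      Matrix.diagonal (fun i => ((hA.isHermitian.eigenvalues i ^ (s + t) : ℝ) : ℂ)) := by
    rw [diagonal_mul_diagonal]
    exact congrArg Matrix.diagonal (funext fun i => by
      rw [← Complex.ofReal_mul, ← Real.rpow_add (hA.eigenvalues_pos i)])
  simp only [Matrix.mul_assoc]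
  rw [← Matrix.mul_assoc (star U) U, hU, Matrix.one_mul,
    ← Matrix.mul_assoc _ _ (star U), hdd]

lemma mpow_zero (hA : A.PosDef) : mpow A 0 = 1 := by
  rw [mpow_def hA.isHermitian]
  simp only [Real.rpow_zero, Complex.ofReal_one, diagonal_one, Matrix.mul_one]
  exact Unitary.coe_mul_star_self _

lemma mpow_one (hA : A.PosDef) : mpow A 1 = A := by
  rw [mpow_def hA.isHermitian]
  simpa [Real.rpow_one, Function.comp_def] using hA.isHermitian.spectral_theorem.symm

lemma mpow_half_eq_sqrt (hA : A.PosDef) : mpow A (1/2) = CFC.sqrt A := by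
  refine (CFC.sqrt_unique ?_ (mpow_posDef hA _).posSemidef.nonneg).symm
  rw [mpow_mul_mpow hA]
  norm_num [mpow_one hA]
end aux

theorem msharp_iff_riccati {n : ℕ} (p q g : Matrix (Fin n) (Fin n) ℂ)
    (hp : p.PosDef) (hq : q.PosDef) :
    g = msharp p q (1/2) ↔ g.PosDef ∧ q = g * p⁻¹ * g := by
  set s := mpow p (1/2) with hs_def
  set si := mpow p (-(1/2)) with hsi_def
  have hs : s.PosDef := mpow_posDef hp _
  have hsi : si.PosDef := mpow_posDef hp _
  have hss : s * si = 1 := by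
    rw [hs_def, hsi_def, mpow_mul_mpow hp]
    norm_num [mpow_zero hp]
  have hsis : si * s = 1 := by
    rw [hs_def, hsi_def, mpow_mul_mpow hp]
    norm_num [mpow_zero hp]
  have hpinv : p⁻¹ = si * si := by
    refine inv_eq_right_inv ?_
    calc p * (si * si) = mpow p 1 * si * si := by
          rw [mpow_one hp, Matrix.mul_assoc]
      _ = 1 := by
          rw [hsi_def, mpow_mul_mpow hp, mpow_mul_mpow hp]
          norm_num [mpow_zero hp]
  -- M = si * q * si is PosDef
  have hM : (si * q * si).PosDef := by
    have := posDef_conj hq (B := si) hsi.det_pos.ne'.isUnit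
    rwa [hsi.isHermitian.eq] at this
  have c1 : ∀ X : Matrix (Fin n) (Fin n) ℂ, s * (si * X) = X := fun X => by
    rw [← Matrix.mul_assoc, hss, Matrix.one_mul]
  have c2 : ∀ X : Matrix (Fin n) (Fin n) ℂ, si * (s * X) = X := fun X => by
    rw [← Matrix.mul_assoc, hsis, Matrix.one_mul]
  have hmsharp : msharp p q (1/2) = s * mpow (si * q * si) (1/2) * s := rfl
  constructor
  · rintro rfl
    set r := mpow (si * q * si) (1/2) with hr_def
    have hr : r.PosDef := mpow_posDef hM _
    have hrr : r * r = si * q * si := by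
      rw [hr_def, mpow_mul_mpow hM]
      norm_num [mpow_one hM]
    constructor
    · rw [hmsharp]
      have := posDef_conj hr (B := s) hs.det_pos.ne'.isUnit
      rwa [hs.isHermitian.eq] at this
    · rw [hmsharp, hpinv]
      calc q = s * (si * (q * (si * s))) := by rw [hsis, Matrix.mul_one, c1]
        _ = s * (r * r * s) := by rw [hrr]; simp only [Matrix.mul_assoc]
        _ = s * (r * (s * (si * (si * (s * (r * s)))))) := by
            rw [c1, c2]; simp only [Matrix.mul_assoc]
        _ = s * r * s * (si * si) * (s * r * s) := by simp only [Matrix.mul_assoc]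
  · rintro ⟨hg, hric⟩
    set w := si * g * si with hw_def
    have hw : w.PosDef := by
      have := posDef_conj hg (B := si) hsi.det_pos.ne'.isUnit
      rwa [hsi.isHermitian.eq] at this
    have hww : w * w = si * q * si := by
      rw [hric, hpinv, hw_def]
      simp only [Matrix.mul_assoc]
    have hweq : w = CFC.sqrt (si * q * si) :=
      (CFC.sqrt_unique hww hw.posSemidef.nonneg).symm
    rw [hmsharp, mpow_half_eq_sqrt hM, ← hweq, hw_def]
    calc g = s * (si * (g * (si * s))) := by rw [hsis, Matrix.mul_one, c1]
      _ = s * (si * g * si) * s := by simp only [Matrix.mul_assoc]
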